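/- Let p be prime, V ⊆ (Z/pZ)^r finite, g : V → (Z/pZ)^s a function, and suppose for every (u,v) ≠ (0,0) in (Z/pZ)^r × (Z/pZ)^s, |∑_{z ∈ V} e^{2πi(u·z + v·g(z))/p}| ≤ K. Let B, B' be boxes of intervals. Then ∑_{x ∈ (Z/pZ)^r} ∑_{y ∈ (Z/pZ)^s} |N_{B_x,B'_y}(V,g) - |V|·vol(B)·vol(B')/p^{r+s}|² ≤ K²·vol(B)·vol(B'). -/

import Mathlib

open Finset

/-- The standard additive character `e_p(t) = e^{2πi t/p}` on `ZMod p`. -/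
noncomputable def ep (p : ℕ) (t : ZMod p) : ℂ :=
  Complex.exp (2 * Real.pi * Complex.I * t.val / p)

/-- The interval `{a, a+1, ..., a+L-1}` of `L` consecutive residues mod `p`. -/
def interval (p : ℕ) (a : ZMod p) (L : ℕ) : Finset (ZMod p) :=
  (Finset.range L).image fun m : ℕ => a + (m : ZMod p)

namespace S15
variable (p : ℕ)

noncomputable def zt (p : ℕ) : ℂ := Complex.exp (2 * Real.pi * Complex.I / p)

lemma ep_eq_pow (t : ZMod p) : ep p t = zt p ^ t.val := by
  rw [ep, zt, ← Complex.exp_nat_mul]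
  ring_nf

lemma zt_pow [NeZero p] : zt p ^ p = 1 :=
  (Complex.isPrimitiveRoot_exp p (NeZero.ne p)).pow_eq_one

lemma ep_zero [NeZero p] : ep p 0 = 1 := by
  simp [ep]

lemma ep_add [NeZero p] (s t : ZMod p) : ep p (s + t) = ep p s * ep p t := by
  rw [ep_eq_pow, ep_eq_pow, ep_eq_pow, ← pow_add, ZMod.val_add,
    ← pow_eq_pow_mod _ (zt_pow p)]

lemma ep_neg [NeZero p] (t : ZMod p) : ep p (-t) = (ep p t)⁻¹ := by
  apply eq_inv_of_mul_eq_one_left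
  rw [← ep_add, neg_add_cancel, ep_zero]

lemma norm_ep (t : ZMod p) : ‖ep p t‖ = 1 := by
  have : ep p t = Complex.exp (((2 * Real.pi * t.val / p : ℝ) : ℂ) * Complex.I) := by
    rw [ep]; push_cast; ring_nf
  rw [this, Complex.norm_exp_ofReal_mul_I]

lemma ep_ne_zero (t : ZMod p) : ep p t ≠ 0 := by
  intro h; have := norm_ep p t; rw [h] at this; simp at this

lemma conj_ep [NeZero p] (t : ZMod p) : (starRingEnd ℂ) (ep p t) = ep p (-t) := by
  rw [ep_neg, inv_eq_one_div, eq_div_iff (ep_ne_zero p t), mul_comm,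
    Complex.mul_conj, Complex.normSq_eq_norm_sq, norm_ep]
  norm_num

lemma sum_ep [NeZero p] (hp : p.Prime) (u : ZMod p) :
    ∑ x : ZMod p, ep p (u * x) = if u = 0 then (p : ℂ) else 0 := by
  split_ifs with h
  · simp only [h, zero_mul, ep_zero, Finset.sum_const, Finset.card_univ, ZMod.card,
      nsmul_eq_mul, mul_one]
  · have hbij : ∑ x : ZMod p, ep p (u * x) = ∑ x : ZMod p, ep p x := by
      haveI : Fact p.Prime := ⟨hp⟩
      exact Fintype.sum_equiv (Equiv.mulLeft₀ u h) _ _ (fun x => rfl)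
    rw [hbij]
    have hval : ∑ x : ZMod p, ep p x = ∑ k ∈ Finset.range p, zt p ^ k := by
      simp only [ep_eq_pow]
      apply Finset.sum_nbij' (fun x : ZMod p => x.val) (fun k => (k : ZMod p))
      · intro x _; exact Finset.mem_range.mpr (ZMod.val_lt x)
      · intro k _; exact Finset.mem_univ _
      · intro x _; simp [ZMod.natCast_val, ZMod.cast_id]
      · intro k hk; exact ZMod.val_cast_of_lt (Finset.mem_range.mp hk)
      · intro x _; rfl
    rw [hval]
    have hne : zt p ≠ 1 := (Complex.isPrimitiveRoot_exp p (NeZero.ne p)).ne_one hp.one_lt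
    rw [geom_sum_eq hne p, zt_pow]
    simp

variable [NeZero p] {n : ℕ}

lemma ep_sum {ι : Type*} (s : Finset ι) (f : ι → ZMod p) :
    ep p (∑ i ∈ s, f i) = ∏ i ∈ s, ep p (f i) := by
  induction s using Finset.cons_induction with
  | empty => simp [ep_zero]
  | cons a s ha ih => rw [Finset.sum_cons, Finset.prod_cons, ep_add, ih]

noncomputable def EE (p : ℕ) {n : ℕ} (u z : Fin n → ZMod p) : ℂ := ep p (∑ i, u i * z i)

lemma EE_add_right (u z z' : Fin n → ZMod p) : EE p u (z + z') = EE p u z * EE p u z' := by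
  rw [EE, EE, EE, ← ep_add]
  congr 1
  rw [← Finset.sum_add_distrib]
  exact Finset.sum_congr rfl fun i _ => by simp [mul_add]

lemma EE_zero_right (u : Fin n → ZMod p) : EE p u 0 = 1 := by simp [EE, ep_zero]

lemma EE_zero_left (z : Fin n → ZMod p) : EE p 0 z = 1 := by simp [EE, ep_zero]

lemma EE_comm (u z : Fin n → ZMod p) : EE p u z = EE p z u := by
  rw [EE, EE]; congr 1; exact Finset.sum_congr rfl fun i _ => mul_comm _ _

lemma conj_EE (u z : Fin n → ZMod p) : (starRingEnd ℂ) (EE p u z) = EE p u (-z) := by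
  rw [EE, EE, conj_ep]
  congr 1
  rw [← Finset.sum_neg_distrib]
  exact Finset.sum_congr rfl fun i _ => by simp

lemma EE_mul_neg (u u' x : Fin n → ZMod p) : EE p u x * EE p u' (-x) = EE p (u - u') x := by
  rw [EE, EE, EE, ← ep_add]
  congr 1
  rw [← Finset.sum_add_distrib]
  exact Finset.sum_congr rfl fun i _ => by simp [sub_mul]; ring

lemma EE_prod (u z : Fin n → ZMod p) : EE p u z = ∏ i, ep p (u i * z i) :=
  ep_sum p _ _

lemma sum_EE (hp : p.Prime) (u : Fin n → ZMod p) :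
    ∑ z : Fin n → ZMod p, EE p u z = if u = 0 then (p : ℂ) ^ n else 0 := by
  have : ∑ z : Fin n → ZMod p, EE p u z
      = ∑ z ∈ Fintype.piFinset (fun _ : Fin n => (Finset.univ : Finset (ZMod p))),
          ∏ i, ep p (u i * z i) := by
    rw [Fintype.piFinset_univ]
    exact Finset.sum_congr rfl fun z _ => EE_prod p u z
  rw [this, ← Finset.prod_univ_sum (fun _ : Fin n => (Finset.univ : Finset (ZMod p)))
    (fun i t => ep p (u i * t))]
  split_ifs with h
  · subst h
    simp [ep_zero]
  · obtain ⟨i, hi⟩ := Function.ne_iff.mp h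
    apply Finset.prod_eq_zero (Finset.mem_univ i)
    rw [sum_ep p hp, if_neg]
    simpa using hi

lemma sum_EE_left (hp : p.Prime) (z : Fin n → ZMod p) :
    ∑ u : Fin n → ZMod p, EE p u z = if z = 0 then (p : ℂ) ^ n else 0 := by
  rw [show (∑ u : Fin n → ZMod p, EE p u z) = ∑ u : Fin n → ZMod p, EE p z u from
    Finset.sum_congr rfl fun u _ => EE_comm p u z, sum_EE p hp]

/-- Fourier inversion for the indicator of a finite set. -/
lemma inversion (hp : p.Prime) (B : Finset (Fin n → ZMod p)) (w : Fin n → ZMod p) :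
    ∑ u : Fin n → ZMod p, (∑ c ∈ B, EE p u c) * EE p u (-w)
      = if w ∈ B then (p : ℂ) ^ n else 0 := by
  have : ∀ u : Fin n → ZMod p, (∑ c ∈ B, EE p u c) * EE p u (-w)
      = ∑ c ∈ B, EE p (u) (c + -w) := by
    intro u
    rw [Finset.sum_mul]
    exact Finset.sum_congr rfl fun c _ => (EE_add_right p u c (-w)).symm
  simp only [this]
  rw [Finset.sum_comm]
  have : ∀ c ∈ B, (∑ u : Fin n → ZMod p, EE p u (c + -w))
      = if c = w then (p : ℂ) ^ n else 0 := by
    intro c _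
    rw [sum_EE_left p hp]
    congr 1
    simp [add_neg_eq_zero]
  rw [Finset.sum_congr rfl this, Finset.sum_ite_eq' B w]

/-- Parseval for Fourier coefficients of an indicator. -/
lemma parseval (hp : p.Prime) (B : Finset (Fin n → ZMod p)) :
    ∑ u : Fin n → ZMod p, (‖∑ c ∈ B, EE p u c‖ : ℝ) ^ 2 = (p : ℝ) ^ n * B.card := by
  have key : ∑ u : Fin n → ZMod p, (∑ c ∈ B, EE p u c) * (starRingEnd ℂ) (∑ c ∈ B, EE p u c)
      = (p : ℂ) ^ n * B.card := by
    have expand : ∀ u : Fin n → ZMod p,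
        (∑ c ∈ B, EE p u c) * (starRingEnd ℂ) (∑ c ∈ B, EE p u c)
        = ∑ c ∈ B, ∑ c' ∈ B, EE p u (c + -c') := by
      intro u
      rw [map_sum, Finset.sum_mul_sum]
      exact Finset.sum_congr rfl fun c _ => Finset.sum_congr rfl fun c' _ => by
        rw [conj_EE, EE_add_right]
    simp only [expand]
    rw [Finset.sum_comm]
    have inner : ∀ c ∈ B, ∑ u : Fin n → ZMod p, ∑ c' ∈ B, EE p u (c + -c')
        = (p:ℂ)^n := by
      intro c hc
      rw [Finset.sum_comm]
      have : ∀ c' ∈ B, ∑ u : Fin n → ZMod p, EE p u (c + -c')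
          = if c' = c then (p:ℂ)^n else 0 := by
        intro c' _
        rw [sum_EE_left p hp]
        simp only [add_neg_eq_zero]
        by_cases h : c' = c
        · simp [h]
        · rw [if_neg h, if_neg (fun hh => h hh.symm)]
      rw [Finset.sum_congr rfl this, Finset.sum_ite_eq' B c, if_pos hc]
    rw [Finset.sum_congr rfl inner, Finset.sum_const, nsmul_eq_mul, mul_comm]
  have cast_eq : ((∑ u : Fin n → ZMod p, ‖∑ c ∈ B, EE p u c‖ ^ 2 : ℝ) : ℂ)
      = (((p : ℝ) ^ n * B.card : ℝ) : ℂ) := by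
    push_cast
    rw [← key]
    exact Finset.sum_congr rfl fun u _ => by
      rw [Complex.mul_conj, Complex.normSq_eq_norm_sq]
      push_cast
      ring
  exact_mod_cast cast_eq

lemma interval_card (hL : n ≤ p) (a : ZMod p) : (interval p a n).card = n := by
  rw [interval, Finset.card_image_of_injOn, Finset.card_range]
  intro m hm m' hm' h
  have : ((m : ZMod p)) = (m' : ZMod p) := by
    have := add_left_cancel h
    exact this
  have h1 : (m : ZMod p).val = m := ZMod.val_cast_of_lt (lt_of_lt_of_le (Finset.mem_range.mp hm) hL)
  have h2 : (m' : ZMod p).val = m' := ZMod.val_cast_of_lt (lt_of_lt_of_le (Finset.mem_range.mp hm') hL)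
  rw [← h1, ← h2, this]

end S15

open S15 in
theorem stmt_15 (p r s : ℕ) (hp : p.Prime) [NeZero p]
    (V : Finset (Fin r → ZMod p)) (g : (Fin r → ZMod p) → (Fin s → ZMod p)) (K : ℝ)
    (hK : ∀ (u : Fin r → ZMod p) (v : Fin s → ZMod p), (u, v) ≠ (0, 0) →
      ‖∑ z ∈ V, ep p (∑ i, u i * z i + ∑ j, v j * g z j)‖ ≤ K)
    (a : Fin r → ZMod p) (L : Fin r → ℕ) (hL : ∀ i, L i ≤ p)
    (b : Fin s → ZMod p) (L' : Fin s → ℕ) (hL' : ∀ j, L' j ≤ p) :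
    ∑ x : Fin r → ZMod p, ∑ y : Fin s → ZMod p,
        |((V.filter fun z =>
            (∀ i, z i - x i ∈ interval p (a i) (L i)) ∧
            (∀ j, g z j - y j ∈ interval p (b j) (L' j))).card : ℝ) -
          (V.card : ℝ) * (∏ i, (L i : ℝ)) * (∏ j, (L' j : ℝ)) / (p : ℝ) ^ (r + s)| ^ 2 ≤
      K ^ 2 * (∏ i, (L i : ℝ)) * ∏ j, (L' j : ℝ) := by
  classical
  set B : Finset (Fin r → ZMod p) := Fintype.piFinset fun i => interval p (a i) (L i) with hB
  set B' : Finset (Fin s → ZMod p) := Fintype.piFinset fun j => interval p (b j) (L' j) with hB'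
  set Ib : (Fin r → ZMod p) → ℂ := fun u => ∑ c ∈ B, EE p u c with hIb
  set Ib' : (Fin s → ZMod p) → ℂ := fun v => ∑ c ∈ B', EE p v c with hIb'
  set T : (Fin r → ZMod p) → (Fin s → ZMod p) → ℂ :=
    fun u v => ∑ z ∈ V, EE p u (-z) * EE p v (-(g z)) with hT
  set cc : ((Fin r → ZMod p) × (Fin s → ZMod p)) → ℂ :=
    fun w => Ib w.1 * Ib' w.2 * T w.1 w.2 with hcc
  set D : Finset ((Fin r → ZMod p) × (Fin s → ZMod p)) := Finset.univ.erase (0, 0) with hD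
  set N : (Fin r → ZMod p) → (Fin s → ZMod p) → ℕ := fun x y =>
    (V.filter fun z =>
      (∀ i, z i - x i ∈ interval p (a i) (L i)) ∧
      (∀ j, g z j - y j ∈ interval p (b j) (L' j))).card with hN
  set m : ℝ := (V.card : ℝ) * (∏ i, (L i : ℝ)) * (∏ j, (L' j : ℝ)) / (p : ℝ) ^ (r + s) with hm
  have ppos : (0:ℝ) < p := by exact_mod_cast hp.pos
  have hcardB : (B.card : ℝ) = ∏ i, (L i : ℝ) := by
    rw [hB, Fintype.card_piFinset]
    push_cast
    exact Finset.prod_congr rfl fun i _ => by rw [interval_card p (hL i)]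
  have hcardB' : (B'.card : ℝ) = ∏ j, (L' j : ℝ) := by
    rw [hB', Fintype.card_piFinset]
    push_cast
    exact Finset.prod_congr rfl fun j _ => by rw [interval_card p (hL' j)]
  -- Step 1 : counting identity
  have step1 : ∀ (x : Fin r → ZMod p) (y : Fin s → ZMod p),
      (p:ℂ)^r * (p:ℂ)^s * (N x y : ℂ)
        = ∑ w : (Fin r → ZMod p) × (Fin s → ZMod p), cc w * EE p w.1 x * EE p w.2 y := by
    intro x y
    have hmemB : ∀ z : Fin r → ZMod p,
        ((∀ i, z i - x i ∈ interval p (a i) (L i)) ↔ z - x ∈ B) := by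
      intro z; rw [hB, Fintype.mem_piFinset]
      simp [Pi.sub_apply]
    have hmemB' : ∀ z : Fin r → ZMod p,
        ((∀ j, g z j - y j ∈ interval p (b j) (L' j)) ↔ g z - y ∈ B') := by
      intro z; rw [hB', Fintype.mem_piFinset]
      simp [Pi.sub_apply]
    have hcount : (p:ℂ)^r * (p:ℂ)^s * (N x y : ℂ)
        = ∑ z ∈ V, (if z - x ∈ B then (p:ℂ)^r else 0) * (if g z - y ∈ B' then (p:ℂ)^s else 0) := by
      rw [hN]
      simp only [Finset.card_filter, Nat.cast_sum, Finset.mul_sum]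
      refine Finset.sum_congr rfl fun z hz => ?_
      by_cases h1 : z - x ∈ B <;> by_cases h2 : g z - y ∈ B' <;>
        simp [hmemB z, hmemB' z, h1, h2]
    rw [hcount]
    have hinv : ∀ z : Fin r → ZMod p,
        (if z - x ∈ B then (p:ℂ)^r else 0) * (if g z - y ∈ B' then (p:ℂ)^s else 0)
        = (∑ u : Fin r → ZMod p, (∑ c ∈ B, EE p u c) * EE p u (-(z - x)))
          * (∑ v : Fin s → ZMod p, (∑ c ∈ B', EE p v c) * EE p v (-(g z - y))) := by
      intro z
      rw [inversion p hp B (z - x), inversion p hp B' (g z - y)]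
    rw [Finset.sum_congr rfl fun z _ => hinv z]
    have hexp : ∀ z : Fin r → ZMod p,
        (∑ u : Fin r → ZMod p, (∑ c ∈ B, EE p u c) * EE p u (-(z - x)))
          * (∑ v : Fin s → ZMod p, (∑ c ∈ B', EE p v c) * EE p v (-(g z - y)))
        = ∑ u : Fin r → ZMod p, ∑ v : Fin s → ZMod p,
            ((∑ c ∈ B, EE p u c) * EE p u (-(z - x)))
              * ((∑ c ∈ B', EE p v c) * EE p v (-(g z - y))) := fun z =>
      Finset.sum_mul_sum _ _ _ _
    rw [Finset.sum_congr rfl fun z _ => hexp z, Finset.sum_comm]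
    rw [Finset.sum_congr rfl fun (u : Fin r → ZMod p) _ => Finset.sum_comm]
    rw [Fintype.sum_prod_type]
    refine Finset.sum_congr rfl fun u _ => Finset.sum_congr rfl fun v _ => ?_
    simp only [hcc, hIb, hIb', hT, Prod.fst, Prod.snd]
    rw [Finset.mul_sum, Finset.sum_mul, Finset.sum_mul]
    refine Finset.sum_congr rfl fun z _ => ?_
    have k1 : EE p u (-(z - x)) = EE p u x * EE p u (-z) := by
      rw [neg_sub, sub_eq_add_neg, EE_add_right]
    have k2 : EE p v (-(g z - y)) = EE p v y * EE p v (-(g z)) := by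
      rw [neg_sub, sub_eq_add_neg, EE_add_right]
    rw [k1, k2]
    ring
  -- Step 2 : value at frequency 0
  have step2 : cc (0, 0) = (B.card : ℂ) * (B'.card : ℂ) * (V.card : ℂ) := by
    simp only [hcc, hIb, hIb', hT, EE_zero_left]
    simp [Finset.sum_const]
  -- Step 3 : deviation identity
  have step3 : ∀ (x : Fin r → ZMod p) (y : Fin s → ZMod p),
      (((p:ℝ)^r * (p:ℝ)^s * ((N x y : ℝ) - m) : ℝ) : ℂ)
        = ∑ w ∈ D, cc w * EE p w.1 x * EE p w.2 y := by
    intro x y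
    have hcast : (((p:ℝ)^r * (p:ℝ)^s * ((N x y : ℝ) - m) : ℝ) : ℂ)
        = (p:ℂ)^r * (p:ℂ)^s * (N x y : ℂ) - (p:ℂ)^r * (p:ℂ)^s * (m : ℂ) := by
      push_cast
      ring
    rw [hcast, step1 x y]
    have hsplit : (∑ w : (Fin r → ZMod p) × (Fin s → ZMod p), cc w * EE p w.1 x * EE p w.2 y)
        = cc (0, 0) * EE p (0,0).1 x * EE p (0,0).2 y
          + ∑ w ∈ D, cc w * EE p w.1 x * EE p w.2 y := by
      rw [hD]
      exact (Finset.add_sum_erase _ _ (Finset.mem_univ _)).symm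
    rw [hsplit]
    have hm0 : (p:ℂ)^r * (p:ℂ)^s * (m : ℂ) = cc (0, 0) * EE p (0,0).1 x * EE p (0,0).2 y := by
      rw [step2]
      have hz1 : EE p ((0,0) : (Fin r → ZMod p) × (Fin s → ZMod p)).1 x = 1 := EE_zero_left p x
      have hz2 : EE p ((0,0) : (Fin r → ZMod p) × (Fin s → ZMod p)).2 y = 1 := EE_zero_left p y
      rw [hz1, hz2, mul_one, mul_one]
      have hBc : (B.card : ℂ) = ((∏ i, (L i : ℝ) : ℝ) : ℂ) := by
        rw [← hcardB]; push_cast; ring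
      have hBc' : (B'.card : ℂ) = ((∏ j, (L' j : ℝ) : ℝ) : ℂ) := by
        rw [← hcardB']; push_cast; ring
      rw [hBc, hBc', hm]
      have hpne : ((p:ℂ))^(r+s) ≠ 0 := by
        apply pow_ne_zero
        exact_mod_cast hp.ne_zero
      push_cast
      rw [pow_add] at hpne ⊢
      field_simp
      rw [div_eq_iff hpne]
      ring
    rw [hm0]
    ring
  -- Step 4 : orthogonality / Parseval for the deviation
  have step4 : ∑ q : (Fin r → ZMod p) × (Fin s → ZMod p),
        (∑ w ∈ D, cc w * EE p w.1 q.1 * EE p w.2 q.2) *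
          (starRingEnd ℂ) (∑ w ∈ D, cc w * EE p w.1 q.1 * EE p w.2 q.2)
      = (p:ℂ)^r * (p:ℂ)^s * ∑ w ∈ D, cc w * (starRingEnd ℂ) (cc w) := by
    have expand : ∀ q : (Fin r → ZMod p) × (Fin s → ZMod p),
        (∑ w ∈ D, cc w * EE p w.1 q.1 * EE p w.2 q.2) *
          (starRingEnd ℂ) (∑ w ∈ D, cc w * EE p w.1 q.1 * EE p w.2 q.2)
        = ∑ w ∈ D, ∑ w' ∈ D,
            (cc w * (starRingEnd ℂ) (cc w'))
              * (EE p w.1 q.1 * EE p w'.1 (-q.1)) * (EE p w.2 q.2 * EE p w'.2 (-q.2)) := by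
      intro q
      rw [map_sum, Finset.sum_mul_sum]
      refine Finset.sum_congr rfl fun w _ => Finset.sum_congr rfl fun w' _ => ?_
      rw [map_mul, map_mul, conj_EE, conj_EE]
      ring
    rw [Finset.sum_congr rfl fun q _ => expand q, Finset.sum_comm]
    have inner : ∀ w ∈ D, ∀ w' ∈ D,
        (∑ q : (Fin r → ZMod p) × (Fin s → ZMod p),
          (cc w * (starRingEnd ℂ) (cc w'))
            * (EE p w.1 q.1 * EE p w'.1 (-q.1)) * (EE p w.2 q.2 * EE p w'.2 (-q.2)))
        = if w' = w then cc w * (starRingEnd ℂ) (cc w) * ((p:ℂ)^r * (p:ℂ)^s) else 0 := by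
      intro w hw w' hw'
      simp only [EE_mul_neg]
      rw [Fintype.sum_prod_type]
      have h1 : ∀ q1 : Fin r → ZMod p,
          (∑ q2 : Fin s → ZMod p,
            cc w * (starRingEnd ℂ) (cc w') * EE p (w.1 - w'.1) q1 * EE p (w.2 - w'.2) q2)
          = cc w * (starRingEnd ℂ) (cc w') * EE p (w.1 - w'.1) q1
              * ∑ q2 : Fin s → ZMod p, EE p (w.2 - w'.2) q2 :=
        fun q1 => (Finset.mul_sum _ _ _).symm
      rw [Finset.sum_congr rfl fun q1 _ => h1 q1, ← Finset.sum_mul, ← Finset.mul_sum,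
        sum_EE p hp, sum_EE p hp]
      by_cases hww : w' = w
      · subst hww
        rw [sub_self, sub_self, if_pos rfl, if_pos rfl, if_pos rfl]
        ring
      · rcases (show w.1 ≠ w'.1 ∨ w.2 ≠ w'.2 by
          by_contra hcon
          push_neg at hcon
          exact hww (Prod.ext hcon.1.symm hcon.2.symm)) with h | h
        · rw [if_neg (fun hh => h (sub_eq_zero.mp hh)), if_neg hww]
          ring
        · rw [if_neg (fun hh => h (sub_eq_zero.mp hh)), if_neg hww]
          ring
    calc ∑ w ∈ D, ∑ q : (Fin r → ZMod p) × (Fin s → ZMod p), ∑ w' ∈ D,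
          (cc w * (starRingEnd ℂ) (cc w'))
            * (EE p w.1 q.1 * EE p w'.1 (-q.1)) * (EE p w.2 q.2 * EE p w'.2 (-q.2))
        = ∑ w ∈ D, ∑ w' ∈ D, ∑ q : (Fin r → ZMod p) × (Fin s → ZMod p),
          (cc w * (starRingEnd ℂ) (cc w'))
            * (EE p w.1 q.1 * EE p w'.1 (-q.1)) * (EE p w.2 q.2 * EE p w'.2 (-q.2)) :=
          Finset.sum_congr rfl fun w _ => Finset.sum_comm
      _ = ∑ w ∈ D, cc w * (starRingEnd ℂ) (cc w) * ((p:ℂ)^r * (p:ℂ)^s) := by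
          refine Finset.sum_congr rfl fun w hw => ?_
          rw [Finset.sum_congr rfl fun w' hw' => inner w hw w' hw',
            Finset.sum_ite_eq' D w, if_pos hw]
      _ = (p:ℂ)^r * (p:ℂ)^s * ∑ w ∈ D, cc w * (starRingEnd ℂ) (cc w) := by
          rw [Finset.mul_sum]
          exact Finset.sum_congr rfl fun w _ => by ring
  -- real version
  have step5 : ∑ q : (Fin r → ZMod p) × (Fin s → ZMod p),
      ((p:ℝ)^r * (p:ℝ)^s * ((N q.1 q.2 : ℝ) - m))^2
      = (p:ℝ)^r * (p:ℝ)^s * ∑ w ∈ D, ‖cc w‖^2 := by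
    have hofreal : ((∑ q : (Fin r → ZMod p) × (Fin s → ZMod p),
        ((p:ℝ)^r * (p:ℝ)^s * ((N q.1 q.2 : ℝ) - m))^2 : ℝ) : ℂ)
        = (((p:ℝ)^r * (p:ℝ)^s * ∑ w ∈ D, ‖cc w‖^2 : ℝ) : ℂ) := by
      rw [Complex.ofReal_sum]
      have hterm : ∀ q : (Fin r → ZMod p) × (Fin s → ZMod p),
          ((((p:ℝ)^r * (p:ℝ)^s * ((N q.1 q.2 : ℝ) - m))^2 : ℝ) : ℂ)
          = (∑ w ∈ D, cc w * EE p w.1 q.1 * EE p w.2 q.2) *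
              (starRingEnd ℂ) (∑ w ∈ D, cc w * EE p w.1 q.1 * EE p w.2 q.2) := by
        intro q
        rw [show ((((p:ℝ)^r * (p:ℝ)^s * ((N q.1 q.2 : ℝ) - m))^2 : ℝ) : ℂ)
              = (((p:ℝ)^r * (p:ℝ)^s * ((N q.1 q.2 : ℝ) - m) : ℝ) : ℂ) *
                (starRingEnd ℂ) (((p:ℝ)^r * (p:ℝ)^s * ((N q.1 q.2 : ℝ) - m) : ℝ) : ℂ) from by
            rw [Complex.conj_ofReal, ← Complex.ofReal_mul, ← pow_two]]
        rw [step3 q.1 q.2]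
      rw [Finset.sum_congr rfl fun q _ => hterm q, step4]
      have hccn : ∀ w ∈ D, cc w * (starRingEnd ℂ) (cc w) = ((‖cc w‖^2 : ℝ) : ℂ) := by
        intro w _
        rw [Complex.mul_conj, Complex.normSq_eq_norm_sq]
      rw [Finset.sum_congr rfl hccn]
      push_cast
      ring
    exact_mod_cast hofreal
  -- bound on coefficients
  have step6 : ∑ w ∈ D, ‖cc w‖^2
      ≤ K^2 * ((p:ℝ)^r * (∏ i, (L i:ℝ))) * ((p:ℝ)^s * (∏ j, (L' j:ℝ))) := by
    have hterm : ∀ w ∈ D, ‖cc w‖^2 ≤ K^2 * (‖Ib w.1‖^2 * ‖Ib' w.2‖^2) := by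
      intro w hw
      have hne : ((-w.1, -w.2) : (Fin r → ZMod p) × (Fin s → ZMod p)) ≠ (0, 0) := by
        intro h
        apply (Finset.mem_erase.mp hw).1
        have h1 : -w.1 = 0 := congrArg Prod.fst h
        have h2 : -w.2 = 0 := congrArg Prod.snd h
        exact Prod.ext (neg_eq_zero.mp h1) (neg_eq_zero.mp h2)
      have hTle : ‖T w.1 w.2‖ ≤ K := by
        have heq : T w.1 w.2 = ∑ z ∈ V, ep p (∑ i, (-w.1) i * z i + ∑ j, (-w.2) j * g z j) := by
          simp only [hT]
          refine Finset.sum_congr rfl fun z _ => ?_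
          rw [EE, EE, ← ep_add]
          congr 1
          congr 1
          · exact Finset.sum_congr rfl fun i _ => by simp
          · exact Finset.sum_congr rfl fun j _ => by simp
        rw [heq]
        exact hK (-w.1) (-w.2) hne
      have h1 : ‖cc w‖ = ‖Ib w.1‖ * ‖Ib' w.2‖ * ‖T w.1 w.2‖ := by
        simp only [hcc, norm_mul]
      calc ‖cc w‖^2 = ‖Ib w.1‖^2 * ‖Ib' w.2‖^2 * ‖T w.1 w.2‖^2 := by rw [h1]; ring
        _ ≤ ‖Ib w.1‖^2 * ‖Ib' w.2‖^2 * K^2 := by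
            apply mul_le_mul_of_nonneg_left (pow_le_pow_left₀ (norm_nonneg _) hTle 2)
            positivity
        _ = K^2 * (‖Ib w.1‖^2 * ‖Ib' w.2‖^2) := by ring
    calc ∑ w ∈ D, ‖cc w‖^2
        ≤ ∑ w ∈ D, K^2 * (‖Ib w.1‖^2 * ‖Ib' w.2‖^2) := Finset.sum_le_sum hterm
      _ ≤ ∑ w : (Fin r → ZMod p) × (Fin s → ZMod p), K^2 * (‖Ib w.1‖^2 * ‖Ib' w.2‖^2) := by
          apply Finset.sum_le_sum_of_subset_of_nonneg (Finset.erase_subset _ _)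
          intro w _ _
          positivity
      _ = K^2 * ((∑ u : Fin r → ZMod p, ‖Ib u‖^2) * (∑ v : Fin s → ZMod p, ‖Ib' v‖^2)) := by
          rw [← Finset.mul_sum, Fintype.sum_prod_type, Finset.sum_mul_sum]
      _ = K^2 * (((p:ℝ)^r * (∏ i, (L i:ℝ))) * ((p:ℝ)^s * (∏ j, (L' j:ℝ)))) := by
          have e1 : (∑ u : Fin r → ZMod p, ‖Ib u‖^2) = (p:ℝ)^r * (∏ i, (L i:ℝ)) := by
            simp only [hIb]
            rw [parseval p hp B, hcardB]
          have e2 : (∑ v : Fin s → ZMod p, ‖Ib' v‖^2) = (p:ℝ)^s * (∏ j, (L' j:ℝ)) := by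
            simp only [hIb']
            rw [parseval p hp B', hcardB']
          rw [e1, e2]
      _ = K^2 * ((p:ℝ)^r * (∏ i, (L i:ℝ))) * ((p:ℝ)^s * (∏ j, (L' j:ℝ))) := by ring
  -- put it together
  have hQ : (0:ℝ) < (p:ℝ)^r * (p:ℝ)^s := by positivity
  have hgoal : ∑ x : Fin r → ZMod p, ∑ y : Fin s → ZMod p, |(N x y : ℝ) - m|^2
      = ∑ q : (Fin r → ZMod p) × (Fin s → ZMod p), ((N q.1 q.2 : ℝ) - m)^2 := by
    rw [Fintype.sum_prod_type]
    exact Finset.sum_congr rfl fun x _ => Finset.sum_congr rfl fun y _ => sq_abs _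
  have hpow : ∑ q : (Fin r → ZMod p) × (Fin s → ZMod p),
      ((p:ℝ)^r * (p:ℝ)^s * ((N q.1 q.2 : ℝ) - m))^2
      = ((p:ℝ)^r * (p:ℝ)^s)^2 * ∑ q : (Fin r → ZMod p) × (Fin s → ZMod p),
          ((N q.1 q.2 : ℝ) - m)^2 := by
    rw [Finset.mul_sum]
    exact Finset.sum_congr rfl fun q _ => by ring
  have key : ((p:ℝ)^r * (p:ℝ)^s)^2 * ∑ q : (Fin r → ZMod p) × (Fin s → ZMod p),
      ((N q.1 q.2 : ℝ) - m)^2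
      ≤ ((p:ℝ)^r * (p:ℝ)^s)^2 * (K^2 * (∏ i, (L i:ℝ)) * ∏ j, (L' j:ℝ)) := by
    rw [← hpow, step5]
    calc (p:ℝ)^r * (p:ℝ)^s * ∑ w ∈ D, ‖cc w‖^2
        ≤ (p:ℝ)^r * (p:ℝ)^s *
            (K^2 * ((p:ℝ)^r * (∏ i, (L i:ℝ))) * ((p:ℝ)^s * (∏ j, (L' j:ℝ)))) :=
          mul_le_mul_of_nonneg_left step6 hQ.le
      _ = ((p:ℝ)^r * (p:ℝ)^s)^2 * (K^2 * (∏ i, (L i:ℝ)) * ∏ j, (L' j:ℝ)) := by ring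
  have := le_of_mul_le_mul_left (by
    calc ((p:ℝ)^r * (p:ℝ)^s)^2 *
          (∑ x : Fin r → ZMod p, ∑ y : Fin s → ZMod p, |(N x y : ℝ) - m|^2)
        = ((p:ℝ)^r * (p:ℝ)^s)^2 * ∑ q : (Fin r → ZMod p) × (Fin s → ZMod p),
            ((N q.1 q.2 : ℝ) - m)^2 := by rw [hgoal]
      _ ≤ ((p:ℝ)^r * (p:ℝ)^s)^2 * (K^2 * (∏ i, (L i:ℝ)) * ∏ j, (L' j:ℝ)) := key)
    (by positivity : (0:ℝ) < ((p:ℝ)^r * (p:ℝ)^s)^2)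
  exact this
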